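/- The Motzkin polynomial m(x,y) = 1 − 3x²y² + x²y⁴ + x⁴y² is not a sum of squares of polynomials in ℝ[x,y]. -/

import Mathlib

/-- Sum of squares as a multiset sum. -/
lemma isSumSq_exists_multiset {R : Type*} [AddCommMonoid R] [Mul R] {s : R} (h : IsSumSq s) :
    ∃ L : Multiset R, s = (L.map (fun a => a * a)).sum := by
  induction h with
  | zero => exact ⟨0, by simp⟩
  | sq_add a _ ih =>
      obtain ⟨L, hL⟩ := ih
      exact ⟨a ::ₘ L, by simp [hL]⟩

lemma isSumSq_map {R S : Type*} [CommRing R] [CommRing S] (f : R →+* S) {s : R}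
    (h : IsSumSq s) : IsSumSq (f s) := by
  induction h with
  | zero => simpa using IsSumSq.zero
  | sq_add a _ ih => simpa [map_add, map_mul] using IsSumSq.sq_add (f a) ih

/-- ℝ is formally real, multiset version. -/
lemma real_formallyReal (L : Multiset ℝ) (h : (L.map (fun a => a * a)).sum = 0) :
    ∀ a ∈ L, a = 0 := by
  intro a ha
  have h1 : ∀ x ∈ L.map (fun a => a * a), (0:ℝ) ≤ x := by
    intro x hx
    obtain ⟨b, _, rfl⟩ := Multiset.mem_map.mp hx
    exact mul_self_nonneg b
  have h2 : a * a ≤ (L.map (fun a => a * a)).sum :=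
    Multiset.single_le_sum h1 _ (Multiset.mem_map_of_mem _ ha)
  have h3 : a * a = 0 := le_antisymm (h ▸ h2) (mul_self_nonneg a)
  exact mul_self_eq_zero.mp h3

/-- ℝ[X] is formally real, multiset version. -/
lemma polyReal_formallyReal (L : Multiset (Polynomial ℝ))
    (h : (L.map (fun a => a * a)).sum = 0) : ∀ a ∈ L, a = 0 := by
  intro a ha
  have key : ∀ t : ℝ, a.eval t = 0 := by
    intro t
    have h0 := congrArg (Polynomial.eval t) h
    rw [show Polynomial.eval t = (Polynomial.evalRingHom t : Polynomial ℝ → ℝ) from rfl,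
      map_multiset_sum, Multiset.map_map] at h0
    refine real_formallyReal (L.map (Polynomial.eval t)) ?_ _
      (Multiset.mem_map_of_mem _ ha)
    rw [Multiset.map_map]
    simpa using h0
  have := Polynomial.funext (p := a) (q := 0) (by simpa using key)
  exact this

/-- coeff of a multiset sum. -/
lemma coeff_multiset_sum {S : Type*} [Semiring S] (T : Multiset (Polynomial S)) (n : ℕ) :
    T.sum.coeff n = (T.map (fun p => p.coeff n)).sum :=
  map_multiset_sum (Polynomial.lcoeff S n) T

lemma natDegree_multiset_sum_le {S : Type*} [Semiring S] (T : Multiset (Polynomial S))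
    (n : ℕ) (h : ∀ p ∈ T, p.natDegree ≤ n) : T.sum.natDegree ≤ n := by
  induction T using Multiset.induction with
  | empty => simp
  | cons a T ih =>
      rw [Multiset.sum_cons]
      exact le_trans (Polynomial.natDegree_add_le _ _)
        (max_le (h a (Multiset.mem_cons_self _ _))
          (ih (fun p hp => h p (Multiset.mem_cons_of_mem hp))))

lemma coeff_mul_self_two_mul {S : Type*} [CommRing S] (p : Polynomial S) (d : ℕ)
    (h : p.natDegree ≤ d) : (p * p).coeff (2 * d) = p.coeff d * p.coeff d := by
  rcases eq_or_lt_of_le h with hEq | hlt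
  · rw [two_mul, ← hEq]
    have h7 := Polynomial.coeff_mul_degree_add_degree p p
    simp only [Polynomial.leadingCoeff] at h7
    exact h7
  · have h1 : p.coeff d = 0 := Polynomial.coeff_eq_zero_of_natDegree_lt hlt
    have h2 : (p * p).coeff (2 * d) = 0 :=
      Polynomial.coeff_eq_zero_of_natDegree_lt
        (lt_of_le_of_lt Polynomial.natDegree_mul_le (by omega))
    simp [h1, h2]

lemma multiset_nat_sup_mem (M : Multiset ℕ) (h : M ≠ 0) : M.sup ∈ M := by
  induction M using Multiset.induction with
  | empty => simp at h
  | cons a T ih =>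
      rw [Multiset.sup_cons]
      rcases eq_or_ne T 0 with rfl | hT
      · rw [Multiset.sup_zero, sup_bot_eq]
        exact Multiset.mem_cons_self _ _
      · rcases le_total a T.sup with h1 | h1
        · rw [max_eq_right h1]
          exact Multiset.mem_cons_of_mem (ih hT)
        · rw [max_eq_left h1]
          exact Multiset.mem_cons_self _ _

/-- Degree bound for sums of squares of polynomials over a formally real ring. -/
lemma natDegree_le_of_sum_sq {S : Type*} [CommRing S]
    (hFR : ∀ (L : Multiset S), (L.map (fun a => a * a)).sum = 0 → ∀ a ∈ L, a = 0)
    (L : Multiset (Polynomial S)) (q : Polynomial S)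
    (hq : (L.map (fun p => p * p)).sum = q)
    (d : ℕ) (hd : q.natDegree < 2 * (d + 1)) :
    ∀ p ∈ L, p.natDegree ≤ d := by
  by_contra hcon
  push_neg at hcon
  obtain ⟨p0, hp0L, hp0⟩ := hcon
  set D := (L.map Polynomial.natDegree).sup with hD
  have hDle : ∀ p ∈ L, p.natDegree ≤ D := fun p hp =>
    Multiset.le_sup (Multiset.mem_map_of_mem _ hp)
  have hDge : d + 1 ≤ D := le_trans hp0 (hDle p0 hp0L)
  -- sup is attained
  have hne : (L.map Polynomial.natDegree) ≠ 0 := by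
    intro h0
    have := Multiset.mem_map_of_mem Polynomial.natDegree hp0L
    rw [h0] at this; simp at this
  obtain ⟨p1, hp1L, hp1⟩ := Multiset.mem_map.mp (multiset_nat_sup_mem _ hne)
  -- coefficient of 2D in q is zero
  have hc : q.coeff (2 * D) = 0 :=
    Polynomial.coeff_eq_zero_of_natDegree_lt (lt_of_lt_of_le hd (by omega))
  have hsum : ((L.map (fun p => p.coeff D)).map (fun a => a * a)).sum = 0 := by
    rw [Multiset.map_map]
    have h5 : (L.map (fun p => (p * p).coeff (2 * D))).sum = 0 := by
      have h6 := coeff_multiset_sum (L.map (fun p => p * p)) (2 * D)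
      rw [hq] at h6
      simp only [Multiset.map_map, Function.comp] at h6
      rw [← h6]
      exact hc
    rw [← h5]
    exact congrArg Multiset.sum
      (Multiset.map_congr rfl (fun p hp => (coeff_mul_self_two_mul p D (hDle p hp)).symm))
  have hzero : p1.coeff D = 0 :=
    hFR _ hsum _ (Multiset.mem_map_of_mem _ hp1L)
  have : p1 = 0 := by
    have : p1.leadingCoeff = 0 := by rw [Polynomial.leadingCoeff, hp1]; exact hzero
    exact Polynomial.leadingCoeff_eq_zero.mp this
  rw [this] at hp1
  simp at hp1
  omega

open MvPolynomial

/-- The Motzkin polynomial `1 − 3x²y² + x²y⁴ + x⁴y²`. -/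
noncomputable def motzkin : MvPolynomial (Fin 2) ℝ :=
  1 - 3 * X 0 ^ 2 * X 1 ^ 2 + X 0 ^ 2 * X 1 ^ 4 + X 0 ^ 4 * X 1 ^ 2

/-- The Motzkin polynomial is not a sum of squares in ℝ[x,y]. -/
theorem motzkin_not_sumSq : ¬ IsSumSq motzkin := by
  intro h
  set φ : MvPolynomial (Fin 2) ℝ →+* Polynomial (Polynomial ℝ) :=
    (MvPolynomial.aeval ![(Polynomial.X : Polynomial (Polynomial ℝ)),
      Polynomial.C Polynomial.X]).toRingHom with hφdef
  set M : Polynomial (Polynomial ℝ) :=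
    Polynomial.C (Polynomial.X ^ 2) * Polynomial.X ^ 4 +
      Polynomial.C (Polynomial.X ^ 4 - 3 * Polynomial.X ^ 2) * Polynomial.X ^ 2 + 1 with hMdef
  have hM : φ motzkin = M := by
    simp only [hφdef, hMdef, motzkin, map_add, map_sub, map_mul, map_pow, map_one,
      map_ofNat, AlgHom.toRingHom_eq_coe, RingHom.coe_coe, MvPolynomial.aeval_X,
      Matrix.cons_val_zero, Matrix.cons_val_one, Matrix.head_cons, Polynomial.C_sub,
      Polynomial.C_mul, Polynomial.C_pow]
    ring
  obtain ⟨L, hL⟩ := isSumSq_exists_multiset (isSumSq_map φ h)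
  rw [hM] at hL
  have hq : (L.map (fun p => p * p)).sum = M := hL.symm
  have hMdeg : M.natDegree ≤ 4 := by
    rw [hMdef]; compute_degree
  have hdeg : ∀ p ∈ L, p.natDegree ≤ 2 :=
    natDegree_le_of_sum_sq polyReal_formallyReal L M hq 2 (by omega)
  -- helper : take coefficients of multiset sum equations
  have key : ∀ {α : Type} (T : Multiset α) (f : α → Polynomial (Polynomial ℝ))
      (q : Polynomial (Polynomial ℝ)) (n : ℕ),
      (T.map f).sum = q → (T.map (fun p => (f p).coeff n)).sum = q.coeff n := by
    intro α T f q n hfq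
    have h6 := coeff_multiset_sum (T.map f) n
    rw [hfq] at h6
    simp only [Multiset.map_map, Function.comp] at h6
    exact h6.symm
  have keyR : ∀ {α : Type} (T : Multiset α) (f : α → Polynomial ℝ)
      (q : Polynomial ℝ) (n : ℕ),
      (T.map f).sum = q → (T.map (fun p => (f p).coeff n)).sum = q.coeff n := by
    intro α T f q n hfq
    have h6 := coeff_multiset_sum (T.map f) n
    rw [hfq] at h6
    simp only [Multiset.map_map, Function.comp] at h6
    exact h6.symm
  -- coefficients of M
  have hM4 : M.coeff 4 = Polynomial.X ^ 2 := by
    rw [hMdef]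
    simp only [Polynomial.coeff_add, Polynomial.coeff_C_mul, Polynomial.coeff_X_pow,
      Polynomial.coeff_one]
    norm_num
  have hM2 : M.coeff 2 = Polynomial.X ^ 4 - 3 * Polynomial.X ^ 2 := by
    rw [hMdef]
    simp only [Polynomial.coeff_add, Polynomial.coeff_C_mul, Polynomial.coeff_X_pow,
      Polynomial.coeff_one]
    norm_num
  have hM0 : M.coeff 0 = 1 := by
    rw [hMdef]
    simp only [Polynomial.coeff_add, Polynomial.coeff_C_mul, Polynomial.coeff_X_pow,
      Polynomial.coeff_one]
    norm_num
  -- E4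
  have E4 : (L.map (fun p => p.coeff 2 * p.coeff 2)).sum = Polynomial.X ^ 2 := by
    have h6 := key L (fun p => p * p) M 4 hq
    rw [hM4] at h6
    rw [← h6]
    exact congrArg Multiset.sum (Multiset.map_congr rfl
      (fun p hp => (coeff_mul_self_two_mul p 2 (hdeg p hp)).symm))
  -- E0
  have E0 : (L.map (fun p => p.coeff 0 * p.coeff 0)).sum = 1 := by
    have h6 := key L (fun p => p * p) M 0 hq
    rw [hM0] at h6
    rw [← h6]
    exact congrArg Multiset.sum (Multiset.map_congr rfl
      (fun p hp => (Polynomial.mul_coeff_zero p p).symm))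
  -- E2
  have coeff_mul_self_2 : ∀ {S : Type} [CommRing S] (p : Polynomial S),
      (p * p).coeff 2 = p.coeff 0 * p.coeff 2 + p.coeff 1 * p.coeff 1 +
        p.coeff 2 * p.coeff 0 := by
    intro S _ p
    rw [Polynomial.coeff_mul, Finset.Nat.sum_antidiagonal_eq_sum_range_succ_mk]
    simp [Finset.sum_range_succ]
  have E2 : (L.map (fun p => p.coeff 0 * p.coeff 2 + p.coeff 1 * p.coeff 1 +
      p.coeff 2 * p.coeff 0)).sum = Polynomial.X ^ 4 - 3 * Polynomial.X ^ 2 := by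
    have h6 := key L (fun p => p * p) M 2 hq
    rw [hM2] at h6
    rw [← h6]
    exact congrArg Multiset.sum (Multiset.map_congr rfl
      (fun p hp => (coeff_mul_self_2 p).symm))
  -- degree bounds over ℝ[X]
  have ha0 : ∀ p ∈ L, (p.coeff 0).natDegree ≤ 0 := by
    intro p hp
    refine natDegree_le_of_sum_sq real_formallyReal (L.map (fun p => p.coeff 0)) 1 ?_ 0
      (by simp) _ (Multiset.mem_map_of_mem _ hp)
    rw [Multiset.map_map]
    simpa [Function.comp] using E0
  have hc1 : ∀ p ∈ L, (p.coeff 2).natDegree ≤ 1 := by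
    intro p hp
    refine natDegree_le_of_sum_sq real_formallyReal (L.map (fun p => p.coeff 2))
      (Polynomial.X ^ 2) ?_ 1 (by simp) _ (Multiset.mem_map_of_mem _ hp)
    rw [Multiset.map_map]
    simpa [Function.comp] using E4
  -- rearrange E2 to isolate the b-squares
  have E2' : (L.map (fun p => p.coeff 1 * p.coeff 1)).sum =
      (Polynomial.X ^ 4 - 3 * Polynomial.X ^ 2) -
        (L.map (fun p => p.coeff 0 * p.coeff 2 + p.coeff 2 * p.coeff 0)).sum := by
    have h7 : (L.map (fun p => p.coeff 0 * p.coeff 2 + p.coeff 1 * p.coeff 1 +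
        p.coeff 2 * p.coeff 0)).sum =
        (L.map (fun p => p.coeff 1 * p.coeff 1)).sum +
        (L.map (fun p => p.coeff 0 * p.coeff 2 + p.coeff 2 * p.coeff 0)).sum := by
      rw [← Multiset.sum_map_add]
      exact congrArg Multiset.sum (Multiset.map_congr rfl (fun p hp => by ring))
    have E2'' := E2
    rw [h7] at E2''
    exact eq_sub_of_add_eq E2''
  have hSother : ((L.map (fun p : Polynomial (Polynomial ℝ) => p.coeff 0 * p.coeff 2 +
      p.coeff 2 * p.coeff 0)).sum).natDegree ≤ 1 := by
    apply _root_.natDegree_multiset_sum_le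
    intro r hr
    obtain ⟨p, hp, rfl⟩ := Multiset.mem_map.mp hr
    refine le_trans (Polynomial.natDegree_add_le _ _) (max_le ?_ ?_) <;>
      refine le_trans Polynomial.natDegree_mul_le ?_
    · have := ha0 p hp; have := hc1 p hp; omega
    · have := ha0 p hp; have := hc1 p hp; omega
  have hb : ∀ p ∈ L, (p.coeff 1).natDegree ≤ 2 := by
    intro p hp
    refine natDegree_le_of_sum_sq real_formallyReal (L.map (fun p => p.coeff 1))
      (Polynomial.X ^ 4 - 3 * Polynomial.X ^ 2 -
        (L.map (fun p : Polynomial (Polynomial ℝ) =>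
          p.coeff 0 * p.coeff 2 + p.coeff 2 * p.coeff 0)).sum)
      ?_ 2 ?_ _ (Multiset.mem_map_of_mem _ hp)
    · rw [Multiset.map_map]
      simpa [Function.comp] using E2'
    · refine lt_of_le_of_lt (Polynomial.natDegree_sub_le _ _) ?_
      have h8 : (Polynomial.X ^ 4 - 3 * Polynomial.X ^ 2 : Polynomial ℝ).natDegree ≤ 4 := by
        compute_degree
      have h9 := hSother
      omega
  -- extract real coefficients
  have hc20 : ∀ p ∈ L, (p.coeff 2).coeff 0 = 0 := by
    intro p hp
    have h9 := keyR L (fun p => p.coeff 2 * p.coeff 2) (Polynomial.X ^ 2) 0 E4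
    refine real_formallyReal (L.map (fun p => (p.coeff 2).coeff 0)) ?_ _
      (Multiset.mem_map_of_mem _ hp)
    rw [Multiset.map_map]
    have h10 : (L.map (fun p => (p.coeff 2 * p.coeff 2).coeff 0)).sum = 0 := by
      rw [h9]; simp
    rw [← h10]
    exact congrArg Multiset.sum (Multiset.map_congr rfl (fun p hp => by
      simp [Function.comp, Polynomial.mul_coeff_zero]))
  have hb0 : ∀ p ∈ L, ((p.coeff 1).coeff 0 : ℝ) = 0 := by
    intro p hp
    have h9 := keyR L (fun p => p.coeff 0 * p.coeff 2 + p.coeff 1 * p.coeff 1 +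
      p.coeff 2 * p.coeff 0) (Polynomial.X ^ 4 - 3 * Polynomial.X ^ 2) 0 E2
    refine real_formallyReal (L.map (fun p => (p.coeff 1).coeff 0)) ?_ _
      (Multiset.mem_map_of_mem _ hp)
    rw [Multiset.map_map]
    have h11 : (L.map (fun p => ((p.coeff 0 * p.coeff 2 + p.coeff 1 * p.coeff 1 +
        p.coeff 2 * p.coeff 0 : Polynomial ℝ)).coeff 0)).sum =
        (L.map (fun p => (p.coeff 1).coeff 0 * (p.coeff 1).coeff 0)).sum := by
      refine congrArg Multiset.sum (Multiset.map_congr rfl (fun p hp => ?_))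
      simp only [Polynomial.coeff_add, Polynomial.mul_coeff_zero, hc20 p hp]
      ring
    rw [h11] at h9
    have h12 : (Polynomial.X ^ 4 - 3 * Polynomial.X ^ 2 : Polynomial ℝ).coeff 0 = 0 := by
      simp
    rw [h12] at h9
    rw [← h9]
    exact congrArg Multiset.sum (Multiset.map_congr rfl (fun p hp => by
      simp [Function.comp]))
  -- coefficient of y^2 in E2 gives the contradiction
  have hfin : (L.map (fun p => (p.coeff 1).coeff 1 * (p.coeff 1).coeff 1)).sum = -3 := by
    have h9 := keyR L (fun p => p.coeff 0 * p.coeff 2 + p.coeff 1 * p.coeff 1 +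
      p.coeff 2 * p.coeff 0) (Polynomial.X ^ 4 - 3 * Polynomial.X ^ 2) 2 E2
    have h12 : (Polynomial.X ^ 4 - 3 * Polynomial.X ^ 2 : Polynomial ℝ).coeff 2 = -3 := by
      simp [Polynomial.coeff_X_pow]
    have h11 : (L.map (fun p => ((p.coeff 0 * p.coeff 2 + p.coeff 1 * p.coeff 1 +
        p.coeff 2 * p.coeff 0 : Polynomial ℝ)).coeff 2)).sum =
        (L.map (fun p => (p.coeff 1).coeff 1 * (p.coeff 1).coeff 1)).sum := by
      refine congrArg Multiset.sum (Multiset.map_congr rfl (fun p hp => ?_))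
      have hac : (p.coeff 0 * p.coeff 2).coeff 2 = 0 :=
        Polynomial.coeff_eq_zero_of_natDegree_lt (lt_of_le_of_lt
          Polynomial.natDegree_mul_le (by have := ha0 p hp; have := hc1 p hp; omega))
      have hca : (p.coeff 2 * p.coeff 0).coeff 2 = 0 :=
        Polynomial.coeff_eq_zero_of_natDegree_lt (lt_of_le_of_lt
          Polynomial.natDegree_mul_le (by have := ha0 p hp; have := hc1 p hp; omega))
      have hbb := coeff_mul_self_2 (p.coeff 1)
      simp only [Polynomial.coeff_add, hac, hca, hbb, hb0 p hp]
      ring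
    rw [h11] at h9
    rw [h9, h12]
  have hnn : (0:ℝ) ≤ (L.map (fun p => (p.coeff 1).coeff 1 * (p.coeff 1).coeff 1)).sum := by
    apply Multiset.sum_nonneg
    intro x hx
    obtain ⟨p, hp, rfl⟩ := Multiset.mem_map.mp hx
    exact mul_self_nonneg _
  rw [hfin] at hnn
  linarith
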